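/- Fix an integer r ≥ 3. Any C_r-free graph on n vertices with minimum degree at least d > 0 has fractional chromatic number at most (r-2)·n/d. -/

import Mathlib

open Finset List


open Finset List

section aux
variable {V : Type*} [DecidableEq V] (G : SimpleGraph V)

/-- A path inside a finite vertex set `s`. -/
def IsPathIn (s : Finset V) (l : List V) : Prop :=
  l.Chain' G.Adj ∧ l.Nodup ∧ ∀ x ∈ l, x ∈ s

lemma length_le_of_no_path {s : Finset V} {k : ℕ}
    (h : ∀ l, IsPathIn G s l → l.length ≠ k + 1) :
    ∀ l, IsPathIn G s l → l.length ≤ k := by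
  intro l hl
  by_contra hlen
  push_neg at hlen
  refine h (l.take (k+1)) ⟨hl.1.take _, hl.2.1.sublist (List.take_sublist _ _),
    fun x hx => hl.2.2 x (List.mem_of_mem_take hx)⟩ ?_
  rw [List.length_take]
  omega

lemma exists_coloring : ∀ (N : ℕ) (s : Finset V) (k : ℕ), s.card ≤ N →
    (∀ l, IsPathIn G s l → l.length ≤ k) →
    ∃ f : V → ℕ, (∀ v ∈ s, f v < k) ∧ ∀ u ∈ s, ∀ v ∈ s, G.Adj u v → f u ≠ f v := by
  intro N
  induction N with
  | zero =>
    intro s k hcard _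
    have hs : s = ∅ := Finset.card_eq_zero.mp (Nat.le_antisymm hcard (Nat.zero_le _))
    exact ⟨fun _ => 0, by simp [hs], by simp [hs]⟩
  | succ N ih =>
    intro s k hcard hpath
    rcases s.eq_empty_or_nonempty with rfl | ⟨v0, hv0⟩
    · exact ⟨fun _ => 0, by simp, by simp⟩
    have hsingl : IsPathIn G s [v0] :=
      ⟨List.isChain_singleton _, List.nodup_singleton _, by simpa⟩
    have hk1 : 1 ≤ k := by simpa using hpath [v0] hsingl
    classical
    set P : ℕ → Prop := fun m => ∃ l, IsPathIn G s l ∧ l.length = m with hP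
    have hex1 : P 1 := ⟨[v0], hsingl, rfl⟩
    set m := Nat.findGreatest P k with hm
    have hm1 : 1 ≤ m := Nat.le_findGreatest hk1 hex1
    have hmk : m ≤ k := Nat.findGreatest_le k
    obtain ⟨l, hl, hlen⟩ : P m := Nat.findGreatest_spec hk1 hex1
    have hnomax : ∀ l', IsPathIn G s l' → l'.length ≠ m + 1 := by
      intro l' hl' hlen'
      have hle : l'.length ≤ k := hpath l' hl'
      exact Nat.findGreatest_is_greatest (P := P) (n := k) (by omega) (by omega) ⟨l', hl', hlen'⟩
    have hlne : l ≠ [] := by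
      intro h; rw [h] at hlen; simp at hlen; omega
    obtain ⟨v, hv⟩ : ∃ v, l.getLast hlne = v := ⟨_, rfl⟩
    have hvl : v ∈ l := hv ▸ List.getLast_mem hlne
    have hvs : v ∈ s := hl.2.2 v hvl
    -- every neighbour of v in s lies on l
    have hnb : ∀ w ∈ s, G.Adj v w → w ∈ l := by
      intro w hws hadj
      by_contra hwl
      refine hnomax (l ++ [w]) ⟨?_, ?_, ?_⟩ (by simp [hlen])
      · refine List.IsChain.append hl.1 (List.isChain_singleton _) ?_
        intro x hx y hy
        obtain ⟨h', rfl⟩ := List.mem_getLast?_eq_getLast hx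
        simp at hy
        subst hy
        exact hv ▸ hadj
      · rw [List.nodup_append]
        exact ⟨hl.2.1, List.nodup_singleton _, by
          intro x hx x' hx'
          simp at hx'
          subst hx'
          exact fun h => hwl (h ▸ hx)⟩
      · intro x hx
        rcases List.mem_append.mp hx with h | h
        · exact hl.2.2 x h
        · simp at h; subst h; exact hws
    -- induct on s.erase v
    have hsub : ∀ l', IsPathIn G (s.erase v) l' → l'.length ≤ k := by
      intro l' hl'
      exact hpath l' ⟨hl'.1, hl'.2.1, fun x hx => Finset.mem_of_mem_erase (hl'.2.2 x hx)⟩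
    have hcard' : (s.erase v).card ≤ N := by
      rw [Finset.card_erase_of_mem hvs]
      omega
    obtain ⟨f', hf'lt, hf'prop⟩ := ih (s.erase v) k hcard' hsub
    set U : Finset ℕ := ((s.erase v).filter (fun w => G.Adj v w)).image f' with hU
    have hUcard : U.card < k := by
      have h1 : (s.erase v).filter (fun w => G.Adj v w) ⊆ l.toFinset.erase v := by
        intro w hw
        simp only [Finset.mem_filter, Finset.mem_erase] at hw
        refine Finset.mem_erase.mpr ⟨hw.1.1, ?_⟩
        rw [List.mem_toFinset]
        exact hnb w hw.1.2 hw.2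
      have h2 : (l.toFinset.erase v).card = m - 1 := by
        rw [Finset.card_erase_of_mem (List.mem_toFinset.mpr hvl),
          List.toFinset_card_of_nodup hl.2.1, hlen]
      calc U.card ≤ ((s.erase v).filter (fun w => G.Adj v w)).card := Finset.card_image_le
        _ ≤ (l.toFinset.erase v).card := Finset.card_le_card h1
        _ = m - 1 := h2
        _ < k := by omega
    have hfree : ∃ c ∈ Finset.range k, c ∉ U := by
      by_contra h
      push_neg at h
      have : Finset.range k ⊆ U := fun c hc => h c hc
      have := Finset.card_le_card this
      rw [Finset.card_range] at this
      omega
    obtain ⟨c, hck, hcU⟩ := hfree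
    rw [Finset.mem_range] at hck
    refine ⟨Function.update f' v c, ?_, ?_⟩
    · intro w hw
      rcases eq_or_ne w v with rfl | hne
      · rw [Function.update_self]; exact hck
      · rw [Function.update_of_ne hne]
        exact hf'lt w (Finset.mem_erase.mpr ⟨hne, hw⟩)
    · intro u hu w hw hadj
      have hne : u ≠ w := G.ne_of_adj hadj
      have key : ∀ w', w' ∈ s.erase v → G.Adj v w' → f' w' ≠ c := by
        intro w' hw' hadj' h
        exact hcU (hU ▸ Finset.mem_image.mpr ⟨w', Finset.mem_filter.mpr ⟨hw', hadj'⟩, h⟩)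
      by_cases hu' : u = v <;> by_cases hw' : w = v
      · exact absurd (hw' ▸ hu' ▸ hne) (by simp)
      · rw [hu', Function.update_self, Function.update_of_ne hw']
        exact fun h => key w (Finset.mem_erase.mpr ⟨hw', hw⟩) (hu' ▸ hadj) h.symm
      · rw [hw', Function.update_self, Function.update_of_ne hu']
        exact key u (Finset.mem_erase.mpr ⟨hu', hu⟩) (hw' ▸ hadj.symm)
      · rw [Function.update_of_ne hu', Function.update_of_ne hw']
        exact hf'prop u (Finset.mem_erase.mpr ⟨hu', hu⟩) w (Finset.mem_erase.mpr ⟨hw', hw⟩) hadj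

end aux



section cyc
variable {V : Type*} (G : SimpleGraph V)

lemma cycle_embedding {r : ℕ} (hr : 3 ≤ r) (u : V) (l : List V)
    (hchain : l.Chain' G.Adj) (hnodup : (u :: l).Nodup)
    (hadj : ∀ x ∈ l, G.Adj u x) (hlen : l.length = r - 1) :
    ∃ f : Fin r ↪ V, ∀ a b, (SimpleGraph.cycleGraph r).Adj a b → G.Adj (f a) (f b) := by
  obtain ⟨m, rfl⟩ : ∃ m, r = m + 3 := ⟨r - 3, by omega⟩
  set L := u :: l with hL
  have hLlen : L.length = m + 3 := by
    rw [hL, List.length_cons, hlen]; omega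
  have hLchain : L.Chain' G.Adj := by
    show List.IsChain _ _
    rw [hL, List.isChain_cons]
    exact ⟨fun y hy => hadj y (List.mem_of_mem_head? hy), hchain⟩
  set g : Fin (m + 3) → V := fun i => L.get (Fin.cast hLlen.symm i) with hg
  have hginj : Function.Injective g := by
    intro a b hab
    have := List.nodup_iff_injective_get.mp hnodup hab
    exact Fin.cast_injective _ (by exact this)
  have hgeq : ∀ (a : Fin (m + 3)) (h : a.val < L.length), g a = L.get ⟨a.val, h⟩ := by
    intro a h; rfl
  have hstep : ∀ a : Fin (m + 3), G.Adj (g a) (g (a + 1)) := by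
    intro a
    have hval : ((a + 1 : Fin (m + 3))).val = (a.val + 1) % (m + 3) := by
      rw [Fin.add_def]; rfl
    by_cases hc : a.val + 1 < m + 3
    · have h1 : ((a + 1 : Fin (m + 3))).val = a.val + 1 := by
        rw [hval, Nat.mod_eq_of_lt hc]
      have key := List.isChain_iff_getElem.mp hLchain a.val (by omega)
      rw [hgeq a (by omega), hgeq (a + 1) (by omega)]
      have heq : (⟨(a + 1 : Fin (m+3)).val, by omega⟩ : Fin L.length) = ⟨a.val + 1, by omega⟩ :=
        Fin.ext h1
      rw [heq]
      exact key
    · have ha : a.val = m + 2 := by have := a.isLt; omega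
      have h1 : ((a + 1 : Fin (m + 3))).val = 0 := by
        rw [hval, ha, show m + 2 + 1 = m + 3 from rfl, Nat.mod_self]
      have hgu : g (a + 1) = u := by
        rw [hgeq (a + 1) (by omega)]
        have heq : (⟨(a + 1 : Fin (m+3)).val, by omega⟩ : Fin L.length) = ⟨0, by omega⟩ :=
          Fin.ext h1
        rw [heq]
        rfl
      have hmem : g a ∈ l := by
        rw [hgeq a (by omega)]
        have heq : (⟨a.val, by omega⟩ : Fin L.length) = ⟨(m + 1) + 1, by omega⟩ :=
          Fin.ext (by simp only [Fin.val_mk]; omega)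
        rw [heq]
        rw [show L.get ⟨(m + 1) + 1, by omega⟩ = l.get ⟨m + 1, by
          have := hLlen; rw [hL] at this; simp at this; omega⟩ from rfl]
        exact List.get_mem _ _
      rw [hgu]
      exact (hadj _ hmem).symm
  refine ⟨⟨g, hginj⟩, ?_⟩
  intro a b hab
  rw [SimpleGraph.cycleGraph_adj'] at hab
  have hone : ((1 : Fin (m + 3))).val = 1 := rfl
  rcases hab with h | h
  · have h2 : a - b = 1 := Fin.ext (by rw [hone]; exact h)
    have h3 : a = b + 1 := by rw [sub_eq_iff_eq_add] at h2; exact h2.trans (add_comm _ _)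
    show G.Adj (g a) (g b)
    rw [h3]
    exact (hstep b).symm
  · have h2 : b - a = 1 := Fin.ext (by rw [hone]; exact h)
    have h3 : b = a + 1 := by rw [sub_eq_iff_eq_add] at h2; exact h2.trans (add_comm _ _)
    show G.Adj (g a) (g b)
    rw [h3]
    exact hstep a

end cyc





/-- A set of vertices is stable (independent) if no two of its vertices are adjacent. -/
def SimpleGraph.IsStableSet {V : Type*} (G : SimpleGraph V) (s : Set V) : Prop :=
  ∀ u ∈ s, ∀ v ∈ s, ¬ G.Adj u v

/-- The fractional chromatic number of a finite graph: the infimum of `a / b` over proper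
`(a,b)`-colourings, i.e. assignments of `b`-element subsets of `{1,…,a}` to the vertices such
that adjacent vertices receive disjoint subsets. -/
noncomputable def SimpleGraph.fracChi {V : Type*} [Fintype V] (G : SimpleGraph V) : ℝ :=
  sInf { x : ℝ | ∃ a b : ℕ, 0 < b ∧
    (∃ c : V → Finset (Fin a), (∀ v, (c v).card = b) ∧
      ∀ u v, G.Adj u v → Disjoint (c u) (c v)) ∧ x = (a : ℝ) / b }

/-- `G` contains no subgraph isomorphic to `H`. -/
def SubgraphFree {W V : Type*} (H : SimpleGraph W) (G : SimpleGraph V) : Prop :=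
  ¬ ∃ f : W ↪ V, ∀ a b, H.Adj a b → G.Adj (f a) (f b)

/-- Fix `r ≥ 3`. Any `C_r`-free graph on `n` vertices with minimum degree at least `d > 0`
has fractional chromatic number at most `(r - 2) · n / d`. -/
theorem fracChi_le_of_cycleFree {V : Type*} [Fintype V] [DecidableEq V]
    (G : SimpleGraph V) [DecidableRel G.Adj] (r n d : ℕ) (hr : 3 ≤ r)
    (hn : Fintype.card V = n) (hd : 0 < d)
    (hfree : SubgraphFree (SimpleGraph.cycleGraph r) G)
    (hmin : ∀ v, d ≤ G.degree v) :
    G.fracChi ≤ ((r : ℝ) - 2) * n / d := by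
  classical
  set k := r - 2 with hk
  have hkpos : 0 < k := by omega
  -- no long paths in any neighbourhood
  have hnopath : ∀ u : V, ∀ l, IsPathIn G (G.neighborFinset u) l → l.length ≤ k := by
    intro u
    apply length_le_of_no_path
    intro l hl hlen
    have hadj : ∀ x ∈ l, G.Adj u x := fun x hx =>
      (SimpleGraph.mem_neighborFinset _ _ _).mp (hl.2.2 x hx)
    have hnodup : (u :: l).Nodup :=
      List.nodup_cons.mpr ⟨fun hu => G.irrefl (hadj u hu), hl.2.1⟩
    exact hfree (cycle_embedding G hr u l hl.1 hnodup hadj (by omega))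
  -- proper colourings of each neighbourhood with k colours
  have hcol : ∀ u : V, ∃ f : V → ℕ, (∀ v ∈ G.neighborFinset u, f v < k) ∧
      ∀ x ∈ G.neighborFinset u, ∀ y ∈ G.neighborFinset u, G.Adj x y → f x ≠ f y :=
    fun u => exists_coloring G (G.neighborFinset u).card (G.neighborFinset u) k le_rfl
      (hnopath u)
  choose f hflt hfprop using hcol
  -- choose d neighbours of each vertex
  have htv : ∀ v : V, ∃ t ⊆ G.neighborFinset v, t.card = d := fun v =>
    Finset.exists_subset_card_eq (by
      rw [G.card_neighborFinset_eq_degree]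
      exact hmin v)
  choose t ht htcard using htv
  -- the fractional colouring
  have hcards : Fintype.card (V × Fin k) = n * k := by
    simp [Fintype.card_prod, hn]
  let e : V × Fin k ≃ Fin (n * k) := Fintype.equivFinOfCardEq hcards
  let g : V → V → Fin k := fun u v => if h : f u v < k then ⟨f u v, h⟩ else ⟨0, hkpos⟩
  let c : V → Finset (Fin (n * k)) := fun v => (t v).image (fun u => e (u, g u v))
  have hccard : ∀ v, (c v).card = d := by
    intro v
    rw [show c v = (t v).image (fun u => e (u, g u v)) from rfl,
      Finset.card_image_of_injOn, htcard v]
    intro u1 _ u2 _ h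
    have := e.injective h
    exact (Prod.mk.injEq _ _ _ _).mp this |>.1
  have hcdisj : ∀ u v, G.Adj u v → Disjoint (c u) (c v) := by
    intro u v huv
    rw [Finset.disjoint_left]
    intro a hau hav
    obtain ⟨w, hwu, hwe⟩ := Finset.mem_image.mp hau
    obtain ⟨w', hwv, hwe'⟩ := Finset.mem_image.mp hav
    have heq := e.injective (hwe.trans hwe'.symm)
    have hw : w = w' := congrArg Prod.fst heq
    subst hw
    have hg : g w u = g w v := congrArg Prod.snd heq
    have hu : u ∈ G.neighborFinset w :=
      (SimpleGraph.mem_neighborFinset _ _ _).mpr ((SimpleGraph.mem_neighborFinset _ _ _).mp (ht u hwu)).symm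
    have hv : v ∈ G.neighborFinset w :=
      (SimpleGraph.mem_neighborFinset _ _ _).mpr ((SimpleGraph.mem_neighborFinset _ _ _).mp (ht v hwv)).symm
    have hne := hfprop w u hu v hv huv
    have h1 : f w u < k := hflt w u hu
    have h2 : f w v < k := hflt w v hv
    apply hne
    have : (⟨f w u, h1⟩ : Fin k) = ⟨f w v, h2⟩ := by
      rw [show (⟨f w u, h1⟩ : Fin k) = g w u by simp [g, dif_pos h1],
        show (⟨f w v, h2⟩ : Fin k) = g w v by simp [g, dif_pos h2]]
      exact hg
    have := congrArg Fin.val this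
    simpa using this
  have hmem : ((n * k : ℕ) : ℝ) / d ∈ { x : ℝ | ∃ a b : ℕ, 0 < b ∧
      (∃ c : V → Finset (Fin a), (∀ v, (c v).card = b) ∧
        ∀ u v, G.Adj u v → Disjoint (c u) (c v)) ∧ x = (a : ℝ) / b } :=
    ⟨n * k, d, hd, ⟨c, hccard, hcdisj⟩, rfl⟩
  have hbdd : BddBelow { x : ℝ | ∃ a b : ℕ, 0 < b ∧
      (∃ c : V → Finset (Fin a), (∀ v, (c v).card = b) ∧
        ∀ u v, G.Adj u v → Disjoint (c u) (c v)) ∧ x = (a : ℝ) / b } := by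
    refine ⟨0, ?_⟩
    rintro x ⟨a, b, hb, _, rfl⟩
    positivity
  have hle : G.fracChi ≤ ((n * k : ℕ) : ℝ) / d := csInf_le hbdd hmem
  refine hle.trans_eq ?_
  have : ((n * k : ℕ) : ℝ) = ((r : ℝ) - 2) * n := by
    push_cast [hk, Nat.cast_sub (by omega : 2 ≤ r)]
    ring
  rw [this]
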